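/- Let (ℬ, 𝒜, i, e, r) be a cleft coextension of abelian categories, and suppose F'ⁿ = 0 for a positive integer n. Then every object X of 𝒜 admits an exact sequence 0 → X → r(e(X)) → r(F'(e(X))) → ⋯ → r(F'^{n-1}(e(X))) → 0 in 𝒜. -/
import Mathlib


open CategoryTheory Limits

universe v u v' u'

/-- The `n`-th power of an endofunctor. -/
def fpow {C : Type u} [Category.{v} C] (G : C ⥤ C) : ℕ → (C ⥤ C)
  | 0 => 𝟭 C
  | n + 1 => fpow G n ⋙ G

/-- `0 → X N → ⋯ → X 0 → 0` is exact. -/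
def IsExactSeq {C : Type u} [Category.{v} C] [Abelian C] (N : ℕ) (X : ℕ → C)
    (d : ∀ n : ℕ, X (n + 1) ⟶ X n) : Prop :=
  Mono (d (N - 1)) ∧ Epi (d 0) ∧
    ∀ i : ℕ, i + 2 ≤ N →
      ∃ w : d (i + 1) ≫ d i = 0, (ShortComplex.mk (d (i + 1)) (d i) w).Exact

section Helpers

variable {C : Type*} [Category C] [Abelian C]

lemma exact_epi_comp_comp_mono {X₀ X₁ X₂ X₃ X₄ : C} {f : X₁ ⟶ X₂} {g : X₂ ⟶ X₃}
    {w : f ≫ g = 0} (hS : (ShortComplex.mk f g w).Exact)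
    (a : X₀ ⟶ X₁) [Epi a] (m : X₃ ⟶ X₄) [Mono m]
    (w' : (a ≫ f) ≫ g ≫ m = 0) :
    (ShortComplex.mk (a ≫ f) (g ≫ m) w').Exact := by
  rw [ShortComplex.exact_iff_exact_up_to_refinements]
  intro A x₂ hx₂
  have hx₂' : x₂ ≫ g = 0 := by
    rw [← cancel_mono m, Category.assoc, zero_comp]
    simpa using hx₂
  obtain ⟨A', π, hπ, x₁, fac⟩ := hS.exact_up_to_refinements x₂ hx₂'
  haveI := hπ
  refine ⟨pullback x₁ a, pullback.fst x₁ a ≫ π, epi_comp _ _, pullback.snd x₁ a, ?_⟩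
  rw [Category.assoc, fac, ← Category.assoc, pullback.condition, Category.assoc]

lemma isIso_kernelι_comp_π {B Cc D : C} (s : B ⟶ Cc) (ρ : Cc ⟶ B)
    (hs : s ≫ ρ = 𝟙 B) {π : Cc ⟶ D} {w : s ≫ π = 0}
    (hc : IsColimit (CokernelCofork.ofπ π w)) : IsIso (kernel.ι ρ ≫ π) := by
  have hq0 : (𝟙 Cc - ρ ≫ s) ≫ ρ = 0 := by
    simp [Preadditive.sub_comp, Category.assoc, hs]
  have hsq : s ≫ kernel.lift ρ (𝟙 Cc - ρ ≫ s) hq0 = 0 := by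
    rw [← cancel_mono (kernel.ι ρ), Category.assoc, kernel.lift_ι, zero_comp,
      Preadditive.comp_sub, Category.comp_id, ← Category.assoc, hs, Category.id_comp, sub_self]
  obtain ⟨q', hq'⟩ := CokernelCofork.IsColimit.desc' hc _ hsq
  refine ⟨q', ?_, ?_⟩
  · rw [Category.assoc]
    erw [hq']
    rw [← cancel_mono (kernel.ι ρ), Category.assoc, kernel.lift_ι, Preadditive.comp_sub,
      Category.comp_id, ← Category.assoc, kernel.condition, zero_comp, sub_zero,
      Category.id_comp]
  · apply Cofork.IsColimit.hom_ext hc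
    slice_lhs 1 2 => erw [hq']
    slice_lhs 1 2 => rw [kernel.lift_ι]
    simp only [Preadditive.sub_comp, Category.id_comp, Category.assoc, Category.comp_id]
    erw [w]
    simp

lemma isExactSeq_of_iso {N : ℕ} {X X' : ℕ → C} (w : ∀ j, X j ≅ X' j)
    {d : ∀ k, X (k + 1) ⟶ X k} (h : IsExactSeq N X d) :
    IsExactSeq N X' (fun k => (w (k + 1)).inv ≫ d k ≫ (w k).hom) := by
  obtain ⟨h1, h2, h3⟩ := h
  refine ⟨?_, ?_, ?_⟩
  · haveI := h1; apply mono_comp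
  · haveI := h2; apply epi_comp
  · intro i hi
    obtain ⟨w0, hex⟩ := h3 i hi
    refine ⟨by simp [reassoc_of% w0], ?_⟩
    refine ShortComplex.exact_of_iso
      (ShortComplex.isoMk (S₁ := ShortComplex.mk (d (i + 1)) (d i) w0)
        (w (i + 2)) (w (i + 1)) (w i) (by simp) (by simp)) hex

theorem spliceIsExactSeq (n : ℕ) (hn : 0 < n)
    (A R : ℕ → C) (μ : ∀ k, A k ⟶ R k) (q : ∀ k, R k ⟶ A (k + 1))
    (hw : ∀ k, μ k ≫ q k = 0)
    (hmono : ∀ k, Mono (μ k)) (hepi : ∀ k, Epi (q k)) (hlast : Epi (μ (n - 1)))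
    (hexact : ∀ k, (ShortComplex.mk (μ k) (q k) (hw k)).Exact) :
    ∃ d : ∀ k : ℕ, (fun j => if j = n then A 0 else R (n - 1 - j)) (k + 1) ⟶
        (fun j => if j = n then A 0 else R (n - 1 - j)) k,
      IsExactSeq n (fun j => if j = n then A 0 else R (n - 1 - j)) d := by
  classical
  have h1eq : ∀ k, k + 1 = n →
      (if k + 1 = n then A 0 else R (n - 1 - (k + 1))) = A (n - 1 - k) := by
    intro k h; rw [if_pos h]; congr 1; omega
  have h2eq : ∀ k, k + 1 < n →
      (if k + 1 = n then A 0 else R (n - 1 - (k + 1))) = R (n - 1 - (k + 1)) := by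
    intro k h; rw [if_neg (by omega)]
  have h3eq : ∀ k, k + 1 < n → A (n - 1 - (k + 1) + 1) = A (n - 1 - k) := by
    intro k h; congr 1; omega
  have hWe : ∀ k, k ≠ n → R (n - 1 - k) = (if k = n then A 0 else R (n - 1 - k)) := by
    intro k h; rw [if_neg h]
  have hw' : ∀ b, ∀ {Z : C} (t : A (b + 1) ⟶ Z), μ b ≫ q b ≫ t = 0 := by
    intro b Z t; rw [← Category.assoc, hw b, zero_comp]
  refine ⟨fun k =>
    if h1 : k + 1 = n then
      eqToHom (h1eq k h1) ≫ μ (n - 1 - k) ≫ eqToHom (hWe k (by omega))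
    else if h2 : k + 1 < n then
      eqToHom (h2eq k h2) ≫ q (n - 1 - (k + 1)) ≫ eqToHom (h3eq k h2) ≫
        μ (n - 1 - k) ≫ eqToHom (hWe k (by omega))
    else 0, ?_, ?_, ?_⟩
  · -- Mono (d (n - 1))
    have hb : n - 1 + 1 = n := by omega
    beta_reduce
    rw [dif_pos hb]
    haveI := hmono (n - 1 - (n - 1))
    infer_instance
  · -- Epi (d 0)
    by_cases hb : 0 + 1 = n
    · beta_reduce
      rw [dif_pos hb]
      simp only [Nat.sub_zero]
      haveI := hlast
      infer_instance
    · have hb2 : 0 + 1 < n := by omega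
      beta_reduce
      rw [dif_neg hb, dif_pos hb2]
      simp only [Nat.sub_zero]
      haveI := hlast
      haveI := hepi (n - 1 - (0 + 1))
      infer_instance
  · intro j hj
    have hjn : ¬ (j + 1 = n) := by omega
    have hjn2 : j + 1 < n := by omega
    haveI := hmono (n - 1 - j)
    haveI := hepi (n - 1 - (j + 1 + 1))
    -- the "tail" monomorphism
    set t : A (n - 1 - (j + 1) + 1) ⟶ (if j = n then A 0 else R (n - 1 - j)) :=
      eqToHom (h3eq j hjn2) ≫ μ (n - 1 - j) ≫ eqToHom (hWe j (by omega)) with ht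
    haveI : Mono t := by rw [ht]; infer_instance
    by_cases hc : j + 1 + 1 = n
    · beta_reduce
      rw [dif_pos hc, dif_neg hjn, dif_pos hjn2]
      haveI : Epi (eqToHom (h1eq (j + 1) hc)) := inferInstance
      have w0 : (eqToHom (h1eq (j + 1) hc) ≫ μ (n - 1 - (j + 1))) ≫
          q (n - 1 - (j + 1)) ≫ t = 0 := by
        rw [Category.assoc, hw', comp_zero]
      refine ⟨?_, ?_⟩
      · simp only [Category.assoc, eqToHom_trans, eqToHom_trans_assoc, eqToHom_refl,
          Category.id_comp, hw', comp_zero]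
      · refine ShortComplex.exact_of_iso (ShortComplex.isoMk
          (S₁ := ShortComplex.mk _ _ w0)
          (Iso.refl _) (eqToIso (hWe (j + 1) (by omega))) (Iso.refl _) ?_ ?_)
          (exact_epi_comp_comp_mono (hexact (n - 1 - (j + 1))) _ _ w0)
        · simp [eqToIso]
        · simp [eqToIso, t]
    · have hc2 : j + 1 + 1 < n := by omega
      beta_reduce
      rw [dif_neg hc, dif_pos hc2, dif_neg hjn, dif_pos hjn2]
      haveI : Epi (eqToHom (h2eq (j + 1) hc2) ≫ q (n - 1 - (j + 1 + 1)) ≫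
          eqToHom (h3eq (j + 1) hc2)) := inferInstance
      have w0 : ((eqToHom (h2eq (j + 1) hc2) ≫ q (n - 1 - (j + 1 + 1)) ≫
            eqToHom (h3eq (j + 1) hc2)) ≫ μ (n - 1 - (j + 1))) ≫
          q (n - 1 - (j + 1)) ≫ t = 0 := by
        rw [Category.assoc, hw', comp_zero]
      refine ⟨?_, ?_⟩
      · simp only [Category.assoc, eqToHom_trans, eqToHom_trans_assoc, eqToHom_refl,
          Category.id_comp, hw', comp_zero]
      · refine ShortComplex.exact_of_iso (ShortComplex.isoMk
          (S₁ := ShortComplex.mk _ _ w0)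
          (Iso.refl _) (eqToIso (hWe (j + 1) (by omega))) (Iso.refl _) ?_ ?_)
          (exact_epi_comp_comp_mono (hexact (n - 1 - (j + 1))) _ _ w0)
        · simp [eqToIso]
        · simp [eqToIso, t]

end Helpers

/-- Let `(ℬ, 𝒜, i, e, r)` be a cleft coextension of abelian categories and
suppose the induced endofunctor `F'` satisfies `F'ⁿ = 0` for a positive integer `n`.  Then
every object `X` of `𝒜` admits an exact sequence
`0 → X → r(e(X)) → r(F'(e(X))) → ⋯ → r(F'^{n-1}(e(X))) → 0` in `𝒜`.
(In the indexing below, the object in homological position `j` with `j < n` is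
`r(F'^{n-1-j}(e(X)))`, and the object in position `n` is `X`.) -/
theorem cleftCoextension_coresolution
    {𝒜 : Type u} [Category.{v} 𝒜] [Abelian 𝒜] [EnoughProjectives 𝒜]
    {ℬ : Type u'} [Category.{v'} ℬ] [Abelian ℬ] [EnoughProjectives ℬ]
    (i : ℬ ⥤ 𝒜) (e : 𝒜 ⥤ ℬ) (r : ℬ ⥤ 𝒜)
    [i.Additive] [e.Additive] [r.Additive]
    [e.Faithful] [PreservesFiniteLimits e] [PreservesFiniteColimits e]
    (adj : e ⊣ r) (η : i ⋙ e ≅ 𝟭 ℬ)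
    (G' : 𝒜 ⥤ 𝒜) (p : (e ⋙ r : 𝒜 ⥤ 𝒜) ⟶ G')
    (hp : ∀ X : 𝒜, adj.unit.app X ≫ p.app X = 0)
    (hcoker : ∀ X : 𝒜, IsColimit (CokernelCofork.ofπ (p.app X) (hp X)))
    (F' : ℬ ⥤ ℬ) (hF' : F' ≅ i ⋙ G' ⋙ e)
    (n : ℕ) (hn : 0 < n) (hFn : ∀ B : ℬ, IsZero ((fpow F' n).obj B))
    (X : 𝒜) :
    ∃ d : ∀ k : ℕ, (fun j => if j = n then X
          else r.obj ((fpow F' (n - 1 - j)).obj (e.obj X))) (k + 1) ⟶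
        (fun j => if j = n then X else r.obj ((fpow F' (n - 1 - j)).obj (e.obj X))) k,
      IsExactSeq n (fun j => if j = n then X
        else r.obj ((fpow F' (n - 1 - j)).obj (e.obj X))) d := by
  classical
  -- All units are monomorphisms
  have hmono : ∀ M : 𝒜, Mono (adj.unit.app M) := fun M => by
    haveI : IsSplitMono (e.map (adj.unit.app M)) :=
      IsSplitMono.mk' ⟨adj.counit.app (e.obj M), adj.left_triangle_components M⟩
    exact e.mono_of_mono_map inferInstance
  -- All projections are epimorphisms
  have hepiP : ∀ M : 𝒜, Epi (p.app M) := fun M => by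
    have := epi_of_isColimit_cofork (hcoker M)
    simpa using this
  -- The short complexes are exact
  have hexact : ∀ M : 𝒜,
      (ShortComplex.mk (adj.unit.app M) (p.app M) (hp M)).Exact := fun M =>
    (ShortComplex.mk (adj.unit.app M) (p.app M) (hp M)).exact_of_g_is_cokernel (hcoker M)
  -- e(G' M) is a kernel of the counit at e(M)
  have κ : ∀ M : 𝒜, kernel (adj.counit.app (e.obj M)) ≅ e.obj (G'.obj M) := fun M => by
    haveI := isIso_kernelι_comp_π (e.map (adj.unit.app M)) (adj.counit.app (e.obj M))
      (adj.left_triangle_components M)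
      (isColimitCoforkMapOfIsColimit' e (hp M) (hcoker M))
    exact asIso (kernel.ι (adj.counit.app (e.obj M)) ≫ e.map (p.app M))
  -- kernels of counits are isomorphism-invariant
  have κ2 : ∀ (B B' : ℬ) (u : B ≅ B'),
      kernel (adj.counit.app B) ≅ kernel (adj.counit.app B') := by
    intro B B' u
    refine kernel.mapIso _ _ ((r ⋙ e).mapIso u) u ?_
    exact (adj.counit.naturality u.hom).symm
  -- e ∘ G' is isomorphic to F' ∘ e pointwise
  have ψ : ∀ M : 𝒜, e.obj (G'.obj M) ≅ F'.obj (e.obj M) := fun M =>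
    (κ M).symm ≪≫ κ2 _ _ (η.app (e.obj M)).symm ≪≫ κ (i.obj (e.obj M)) ≪≫
      (hF'.app (e.obj M)).symm
  -- comparison of powers
  have φ : ∀ k, e.obj ((fpow G' k).obj X) ≅ (fpow F' k).obj (e.obj X) := by
    intro k
    induction k with
    | zero => exact Iso.refl _
    | succ k ih => exact ψ ((fpow G' k).obj X) ≪≫ F'.mapIso ih
  -- vanishing of the n-th power of G' at X
  have hzero : IsZero ((fpow G' n).obj X) := by
    have h0 : IsZero (e.obj ((fpow G' n).obj X)) := (hFn (e.obj X)).of_iso (φ n)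
    rw [IsZero.iff_id_eq_zero]
    apply e.map_injective
    rw [CategoryTheory.Functor.map_id, CategoryTheory.Functor.map_zero]
    exact h0.eq_of_src _ _
  -- the last unit is an epimorphism
  have hlast : Epi (adj.unit.app ((fpow G' (n - 1)).obj X)) := by
    have hz : IsZero (G'.obj ((fpow G' (n - 1)).obj X)) := by
      have hz' : IsZero ((fpow G' (n - 1 + 1)).obj X) := by
        rw [Nat.sub_add_cancel hn]; exact hzero
      exact hz'
    refine Preadditive.epi_of_cancel_zero _ (fun {R0} g hg => ?_)
    obtain ⟨l, hl⟩ :=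
      CokernelCofork.IsColimit.desc' (hcoker ((fpow G' (n - 1)).obj X)) g hg
    have hl' : p.app ((fpow G' (n - 1)).obj X) ≫ l = g := by simpa using hl
    rw [← hl', hz.eq_of_tgt (p.app ((fpow G' (n - 1)).obj X)) 0, zero_comp]
  obtain ⟨d0, hd0⟩ := spliceIsExactSeq n hn (fun k => (fpow G' k).obj X)
    (fun k => r.obj (e.obj ((fpow G' k).obj X)))
    (fun k => adj.unit.app ((fpow G' k).obj X))
    (fun k => p.app ((fpow G' k).obj X))
    (fun k => hp ((fpow G' k).obj X))
    (fun k => hmono ((fpow G' k).obj X))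
    (fun k => hepiP ((fpow G' k).obj X))
    hlast
    (fun k => hexact ((fpow G' k).obj X))
  have w : ∀ j : ℕ,
      (if j = n then (fpow G' 0).obj X
        else r.obj (e.obj ((fpow G' (n - 1 - j)).obj X))) ≅
      (if j = n then X else r.obj ((fpow F' (n - 1 - j)).obj (e.obj X))) := by
    intro j
    by_cases h : j = n
    · rw [if_pos h, if_pos h]; exact Iso.refl _
    · rw [if_neg h, if_neg h]; exact r.mapIso (φ (n - 1 - j))
  exact ⟨_, isExactSeq_of_iso w hd0⟩
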